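/- Let γ ∈ (0,1) be irrational, and write γ = j₀/q + γ̃ with j₀ ∈ {0,…,q−1} and γ̃ ∈ (0,1/q). Let τ be a permutation of {1,…,q} and let x ∈ [0,1/q). Then for every i ∈ {1,…,q}: (a) if x < γ̃, then (R_γ ∘ E_τ ∘ R_{−γ})(x + (i−1)/q) = x + (π(i)−1)/q in ℝ/ℤ, where π = σ^{j₀+1} τ σ^{−(j₀+1)}; (b) if x ≥ γ̃, then (R_γ ∘ E_τ ∘ R_{−γ})(x + (i−1)/q) = x + (π(i)−1)/q, where π = σ^{j₀} τ σ^{−j₀}. -/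

import Mathlib

open Equiv

noncomputable section

/-- The circle `ℝ/ℤ`. -/
abbrev Circ : Type := AddCircle (1 : ℝ)

/-- Rotation by `a` : the bijection `x ↦ x + a` of the circle. -/
def Rot (a : Circ) : Equiv.Perm Circ := Equiv.addRight a

/-- The subgroup `{ p/q mod 1 : p ∈ ℤ }` of the circle. -/
def RatPts (q : ℕ) : AddSubgroup Circ :=
  AddSubgroup.zmultiples (((q : ℝ)⁻¹ : ℝ) : Circ)

/-- The group of bijections of the circle all of whose displacements lie in `RatPts q`. -/
def Delta (q : ℕ) : Subgroup (Equiv.Perm Circ) where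
  carrier := {f | ∀ x : Circ, f x - x ∈ RatPts q}
  one_mem' := by intro x; simpa using zero_mem (RatPts q)
  mul_mem' := by
    intro f g hf hg x
    have h1 : f (g x) - g x ∈ RatPts q := hf (g x)
    have h2 : g x - x ∈ RatPts q := hg x
    have h3 := add_mem h1 h2
    simpa [Equiv.Perm.mul_apply, sub_add_sub_cancel] using h3
  inv_mem' := by
    intro f hf x
    have h1 : f (f⁻¹ x) - f⁻¹ x ∈ RatPts q := hf (f⁻¹ x)
    rw [← Equiv.Perm.mul_apply, mul_inv_cancel, Equiv.Perm.one_apply] at h1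
    simpa using neg_mem h1

/-- The subgroup `A` of the circle generated by the classes of `α₁, …, α_s`. -/
def Agrp (s : ℕ) (α : Fin s → ℝ) : AddSubgroup Circ :=
  AddSubgroup.closure (Set.range fun i => ((α i : ℝ) : Circ))

/-- The group `H` generated by the rotations `R_{αᵢ}` and the maps `E_{τⱼ}`. -/
def Hgrp (s m q : ℕ) (α : Fin s → ℝ) (τs : Fin m → Equiv.Perm (Fin q))
    (E : Equiv.Perm (Fin q) → Equiv.Perm Circ) : Subgroup (Equiv.Perm Circ) :=
  Subgroup.closure ((Set.range fun i => Rot ((α i : ℝ) : Circ)) ∪ (Set.range fun j => E (τs j)))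

/-- The group `Q` generated by the maps `E_{τⱼ}`. -/
def Qgrp (m q : ℕ) (τs : Fin m → Equiv.Perm (Fin q))
    (E : Equiv.Perm (Fin q) → Equiv.Perm Circ) : Subgroup (Equiv.Perm Circ) :=
  Subgroup.closure (Set.range fun j => E (τs j))

/-- The subgroup `𝔖(Q)` of `S_q` generated by `τ₁, …, τ_m`. -/
def SQgrp (m q : ℕ) (τs : Fin m → Equiv.Perm (Fin q)) : Subgroup (Equiv.Perm (Fin q)) :=
  Subgroup.closure (Set.range τs)

/-- The subgroup `W = ⟨σ, τ₁, …, τ_m⟩` of `S_q`, where `σ` is the `q`-cycle. -/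
def Wgrp (m q : ℕ) (τs : Fin m → Equiv.Perm (Fin q)) : Subgroup (Equiv.Perm (Fin q)) :=
  Subgroup.closure ({finRotate q} ∪ Set.range τs)


lemma circ_nat_zero (d : ℕ) : (((d : ℝ)) : Circ) = 0 := by
  rw [AddCircle.coe_eq_zero_iff]
  exact ⟨d, by simp⟩

lemma circ_sub_nat (a : ℝ) (d : ℕ) : ((a - d : ℝ) : Circ) = ((a : ℝ) : Circ) := by
  have h : ((a - d : ℝ) : Circ) = ((a:ℝ) : Circ) - (((d:ℝ)) : Circ) := rfl
  rw [h, circ_nat_zero, sub_zero]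

lemma finRotate_pow_val (q : ℕ) (hq : 2 ≤ q) (m : ℕ) (k : Fin q) :
    (((finRotate q ^ m) k : Fin q) : ℕ) = ((k : ℕ) + m) % q := by
  obtain ⟨q', rfl⟩ : ∃ q', q = q' + 1 := ⟨q - 1, by omega⟩
  induction m with
  | zero => simp [Nat.mod_eq_of_lt k.isLt]
  | succ m ih =>
    rw [pow_succ', Equiv.Perm.mul_apply, finRotate_succ_apply, Fin.val_add, ih, Fin.val_one',
      ← Nat.add_mod, Nat.add_assoc]

lemma key (q : ℕ) (hq : 2 ≤ q)
    (E : Equiv.Perm (Fin q) → Equiv.Perm Circ)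
    (hE : ∀ (τ : Equiv.Perm (Fin q)) (i : Fin q) (t : ℝ), 0 ≤ t → t < 1 / q →
      E τ ((((i : ℕ) : ℝ) / q + t : ℝ) : Circ) = ((((τ i : ℕ) : ℝ) / q + t : ℝ) : Circ))
    (τ : Equiv.Perm (Fin q)) (m : ℕ) (i : Fin q) (t : ℝ) (ht0 : 0 ≤ t) (ht1 : t < 1/q) :
    E τ ((((i:ℕ):ℝ)/q - (m:ℝ)/q + t : ℝ) : Circ)
      = (((((finRotate q ^ m * τ * (finRotate q ^ m)⁻¹) i : ℕ):ℝ)/q - (m:ℝ)/q + t : ℝ) : Circ) := by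
  have hq0 : (q:ℝ) ≠ 0 := by positivity
  set p := (finRotate q ^ m * τ * (finRotate q ^ m)⁻¹) i with hp
  set k := (finRotate q ^ m)⁻¹ i with hk
  have hki : (finRotate q ^ m) k = i := by
    rw [hk, ← Equiv.Perm.mul_apply, mul_inv_cancel, Equiv.Perm.one_apply]
  have hA : ((k:ℕ) + m) % q = (i:ℕ) := by
    rw [← finRotate_pow_val q hq m k, hki]
  obtain ⟨d, hd⟩ : ∃ d : ℕ, (k:ℕ) + m = q * d + (i:ℕ) :=
    ⟨((k:ℕ) + m)/q, by rw [← hA]; exact (Nat.div_add_mod _ _).symm⟩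
  have hπ : (finRotate q ^ m * τ * (finRotate q ^ m)⁻¹) i = (finRotate q ^ m) (τ k) := by
    simp [Equiv.Perm.mul_apply, hk]
  have hB : (((finRotate q ^ m * τ * (finRotate q ^ m)⁻¹) i : ℕ)) = ((τ k : ℕ) + m) % q := by
    rw [hπ, finRotate_pow_val q hq m (τ k)]
  obtain ⟨d', hd'⟩ : ∃ d' : ℕ, ((τ k : ℕ)) + m
      = q * d' + (((finRotate q ^ m * τ * (finRotate q ^ m)⁻¹) i : ℕ)) :=
    ⟨((τ k : ℕ) + m)/q, by rw [hB]; exact (Nat.div_add_mod _ _).symm⟩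
  have hdr : ((k:ℕ):ℝ) + m = q * d + i := by exact_mod_cast hd
  have hdr' : (((τ k:ℕ)):ℝ) + m
      = q * d' + (((finRotate q ^ m * τ * (finRotate q ^ m)⁻¹) i : ℕ):ℝ) := by exact_mod_cast hd'
  have gen : ∀ (A B : ℝ) (D : ℕ), B + (m:ℝ) = q * D + A → A/q - (m:ℝ)/q + t = (B/q + t) - D := by
    intro A B D h
    field_simp
    linarith
  have e1 := gen ((i:ℕ):ℝ) ((k:ℕ):ℝ) d hdr
  have e2 := gen (((finRotate q ^ m * τ * (finRotate q ^ m)⁻¹) i : ℕ):ℝ) (((τ k:ℕ)):ℝ) d' hdr'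
  rw [e1, e2, circ_sub_nat, circ_sub_nat, hE τ k t ht0 ht1]

theorem stmt_7
    (q : ℕ) (hq : 2 ≤ q)
    (E : Equiv.Perm (Fin q) → Equiv.Perm Circ)
    (hE : ∀ (τ : Equiv.Perm (Fin q)) (i : Fin q) (t : ℝ), 0 ≤ t → t < 1 / q →
      E τ ((((i : ℕ) : ℝ) / q + t : ℝ) : Circ) = ((((τ i : ℕ) : ℝ) / q + t : ℝ) : Circ))
    (γ : ℝ) (hγ0 : 0 < γ) (hγ1 : γ < 1) (hirr : Irrational γ)
    (j₀ : ℕ) (hj₀ : j₀ < q)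
    (γt : ℝ) (hγt0 : 0 < γt) (hγtq : γt < 1 / q)
    (hγ : γ = (j₀ : ℝ) / q + γt)
    (τ : Equiv.Perm (Fin q)) (x : ℝ) (hx0 : 0 ≤ x) (hxq : x < 1 / q) (i : Fin q) :
    (x < γt →
      (Rot ((γ : ℝ) : Circ) * E τ * Rot ((-γ : ℝ) : Circ))
          ((x + ((i : ℕ) : ℝ) / q : ℝ) : Circ)
        = ((x + (((finRotate q ^ (j₀ + 1) * τ * (finRotate q ^ (j₀ + 1))⁻¹) i : ℕ) : ℝ) / q :
            ℝ) : Circ)) ∧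
    (γt ≤ x →
      (Rot ((γ : ℝ) : Circ) * E τ * Rot ((-γ : ℝ) : Circ))
          ((x + ((i : ℕ) : ℝ) / q : ℝ) : Circ)
        = ((x + (((finRotate q ^ j₀ * τ * (finRotate q ^ j₀)⁻¹) i : ℕ) : ℝ) / q :
            ℝ) : Circ)) := by
  have hq0 : (q:ℝ) ≠ 0 := by positivity
  have coe_add : ∀ a b : ℝ, ((a : ℝ) : Circ) + ((b : ℝ) : Circ) = ((a + b : ℝ) : Circ) :=
    fun a b => rfl
  have main : ∀ (m : ℕ) (t : ℝ), 0 ≤ t → t < 1/q → x + ((i:ℕ):ℝ)/q + -γ = ((i:ℕ):ℝ)/q - (m:ℝ)/q + t →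
      (Rot ((γ : ℝ) : Circ) * E τ * Rot ((-γ : ℝ) : Circ))
          ((x + ((i : ℕ) : ℝ) / q : ℝ) : Circ)
        = ((x + (((finRotate q ^ m * τ * (finRotate q ^ m)⁻¹) i : ℕ) : ℝ) / q : ℝ) : Circ) := by
    intro m t ht0 ht1 harg
    have h1 : (Rot ((γ : ℝ) : Circ) * E τ * Rot ((-γ : ℝ) : Circ))
          ((x + ((i : ℕ) : ℝ) / q : ℝ) : Circ)
        = E τ (((x + ((i:ℕ):ℝ)/q + -γ : ℝ)) : Circ) + ((γ:ℝ) : Circ) := by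
      simp only [Equiv.Perm.mul_apply, Rot, Equiv.coe_addRight, coe_add]
    rw [h1, harg, key q hq E hE τ m i t ht0 ht1, coe_add]
    congr 1
    have : ((((finRotate q ^ m * τ * (finRotate q ^ m)⁻¹) i : ℕ) : ℝ)/q - (m:ℝ)/q + t)
        = (((i:ℕ):ℝ)/q - (m:ℝ)/q + t) - (((i:ℕ):ℝ)/q)
          + (((finRotate q ^ m * τ * (finRotate q ^ m)⁻¹) i : ℕ) : ℝ)/q := by ring
    rw [this, ← harg]
    ring
  constructor
  · intro hx
    apply main (j₀ + 1) (x + 1/q - γt) (by linarith) (by linarith)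
    push_cast
    rw [hγ]
    ring
  · intro hx
    apply main j₀ (x - γt) (by linarith) (by linarith)
    rw [hγ]
    ring
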